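/- arXiv:0807.2044 — 2 statements merged into one kernel-verified Lean document; each statement's English description precedes it below -/
import Mathlib

section
/- Let π be a group with π/[π,π] ≅ ℤ/2k (k ≥ 1), κ: π → ℤ/2 the unique epimorphism, K = ker κ, and A = K/[K,K] the Alexander module with the ℤ/2-action induced by conjugation. Let à be the kernel of the canonical map A → ℤ/k. If A is finitely generated as an abelian group and π admits no abelian quotient strictly larger than ℤ/2k of the appropriate type, then: à is a finite group of odd order, the generator t of ℤ/2 acts on à as multiplication by -1, and the exact sequence 0 → à → A → ℤ/k → 0 splits as ℤ[ℤ/2]-modules with A = à ⊕ ker(1-t). -/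
open commutatorElement

private lemma aux_conj {H : Type*} [Group H] (g x : H) :
    Abelianization.of (g * x * g⁻¹) = Abelianization.of x := by
  rw [map_mul, map_mul, map_inv, mul_comm, inv_mul_cancel_left]

private lemma aux_fin_odd (H : Type*) [CommGroup H] [Group.FG H]
    (h2 : ∀ x : H, ∃ y : H, y * y = x) : Finite H ∧ Odd (Nat.card H) := by
  obtain ⟨n, ι, fι, p, hp, e, ⟨f⟩⟩ := AddCommGroup.equiv_free_prod_directSum_zmod (Additive H)
  have h2' : ∀ v : (Fin n →₀ ℤ) × (DirectSum ι fun i => ZMod (p i ^ e i)), ∃ w, w + w = v := by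
    intro v
    obtain ⟨y, hy⟩ := h2 (Additive.toMul (f.symm v))
    exact ⟨f (Additive.ofMul y), by
      rw [← map_add]
      show f (Additive.ofMul (y * y)) = v
      rw [hy]; simp⟩
  have hn : n = 0 := by
    by_contra hn
    obtain ⟨w, hw⟩ := h2' (Finsupp.single ⟨0, Nat.pos_of_ne_zero hn⟩ 1, 0)
    have := congrArg (fun z => z.1 ⟨0, Nat.pos_of_ne_zero hn⟩) hw
    simp [Finsupp.single_eq_same] at this
    omega
  subst hn
  haveI : ∀ i, NeZero (p i ^ e i) := fun i => ⟨pow_ne_zero _ (hp i).pos.ne'⟩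
  haveI : Subsingleton (Fin 0 →₀ ℤ) :=
    ⟨fun a b => Finsupp.ext fun i => isEmptyElim i⟩
  haveI : Finite (DirectSum ι fun i => ZMod (p i ^ e i)) :=
    Finite.of_injective (fun (v : DirectSum ι fun i => ZMod (p i ^ e i)) (i : ι) => v i)
      (fun a b hab => DFunLike.coe_injective hab)
  have hfin : Finite H := Finite.of_equiv _ (f.toEquiv.symm : _ ≃ Additive H)
  refine ⟨hfin, ?_⟩
  rw [← Nat.not_even_iff_odd]
  intro hev
  have hdvd := hev.two_dvd
  haveI := Fintype.ofFinite H
  rw [Nat.card_eq_fintype_card] at hdvd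
  haveI : Fact (Nat.Prime 2) := ⟨Nat.prime_two⟩
  obtain ⟨x, hx⟩ := exists_prime_orderOf_dvd_card 2 hdvd
  have hinj : Function.Injective (fun z : H => z * z) :=
    Finite.injective_iff_surjective.mpr h2
  have : x = 1 := hinj (by
    show x * x = 1 * 1
    rw [← sq, ← hx, pow_orderOf_eq_one, one_mul])
  rw [this, orderOf_one] at hx
  omega

/-- pull back a subgroup of the abelianization of `ker κ` to `G`. -/
private def pullSub {G : Type*} [Group G] {Q : Type*} [Group Q] (κ : G →* Q)
    (S : Subgroup (Abelianization ↥κ.ker)) : Subgroup G where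
  carrier := {g | ∃ hg : g ∈ κ.ker, Abelianization.of (⟨g, hg⟩ : ↥κ.ker) ∈ S}
  one_mem' := ⟨κ.ker.one_mem, by
      have h : (⟨1, κ.ker.one_mem⟩ : ↥κ.ker) = 1 := rfl
      rw [h, map_one]; exact S.one_mem⟩
  mul_mem' := by
    rintro a b ⟨ha, hA⟩ ⟨hb, hB⟩
    refine ⟨mul_mem ha hb, ?_⟩
    have h : (⟨a * b, mul_mem ha hb⟩ : ↥κ.ker) = ⟨a, ha⟩ * ⟨b, hb⟩ := rfl
    rw [h, map_mul]; exact S.mul_mem hA hB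
  inv_mem' := by
    rintro a ⟨ha, hA⟩
    refine ⟨inv_mem ha, ?_⟩
    have h : (⟨a⁻¹, inv_mem ha⟩ : ↥κ.ker) = (⟨a, ha⟩ : ↥κ.ker)⁻¹ := rfl
    rw [h, map_inv]; exact S.inv_mem hA

private lemma mem_pullSub {G : Type*} [Group G] {Q : Type*} [Group Q] {κ : G →* Q}
    {S : Subgroup (Abelianization ↥κ.ker)} {g : G} :
    g ∈ pullSub κ S ↔ ∃ hg : g ∈ κ.ker, Abelianization.of (⟨g, hg⟩ : ↥κ.ker) ∈ S :=
  Iff.rfl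

/-- Let `π` be a group with `π/[π,π] ≅ ℤ/2k`, `κ : π → ℤ/2` the
(unique) epimorphism, `K = ker κ`, and `A = K/[K,K]` the Alexander module, the
generator `t` of `ℤ/2` acting via conjugation by a lift `t̄`.  Let `Ã` be the
kernel of the canonical map `A → ℤ/k` (equivalently, of the map
`ρ : A → π/[π,π] = ℤ/2k` induced by the inclusion `K ⊆ π`).  If `A` is finitely
generated, then `Ã` is a finite group of odd order, `t` acts on `Ã` as
multiplication by `-1` (inversion), and `0 → Ã → A → ℤ/k → 0` splits:
`A = Ã ⊕ ker(1 - t)`. -/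
theorem stmt_13 (k : ℕ) (hk : 1 ≤ k) (G : Type*) [Group G]
    (ψ : Abelianization G ≃* Multiplicative (ZMod (2 * k)))
    (κ : G →* Multiplicative (ZMod 2)) (hκ : Function.Surjective κ)
    (hfg : Group.FG (Abelianization ↥κ.ker))
    (tbar : G) (htbar : κ tbar = Multiplicative.ofAdd 1)
    (T : ↥κ.ker ≃* ↥κ.ker)
    (hT : ∀ x : ↥κ.ker, (T x : G) = tbar⁻¹ * ↑x * tbar)
    (tAct : Abelianization ↥κ.ker →* Abelianization ↥κ.ker)
    (htAct : ∀ x : ↥κ.ker, tAct (Abelianization.of x) = Abelianization.of (T x))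
    (ρ : Abelianization ↥κ.ker →* Multiplicative (ZMod (2 * k)))
    (hρ : ∀ x : ↥κ.ker, ρ (Abelianization.of x) = ψ (Abelianization.of (x : G))) :
    Finite ↥ρ.ker ∧ Odd (Nat.card ↥ρ.ker) ∧
      (∀ a ∈ ρ.ker, tAct a = a⁻¹) ∧
      (∀ a : Abelianization ↥κ.ker, ∃ b ∈ ρ.ker, ∃ c, tAct c = c ∧ a = b * c) ∧
      (∀ a ∈ ρ.ker, tAct a = a → a = 1) := by
  have hzmod2 : ∀ c : Multiplicative (ZMod 2), c = 1 ∨ c = Multiplicative.ofAdd 1 := by decide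
  have hsurjA : Function.Surjective (Abelianization.of : ↥κ.ker → Abelianization ↥κ.ker) :=
    fun a => Quotient.inductionOn a fun x => ⟨x, rfl⟩
  have hconjK : ∀ u x : ↥κ.ker,
      Abelianization.of (u * x * u⁻¹) = Abelianization.of x := fun u x => aux_conj u x
  have hconj_mem : ∀ (b : G) (x : ↥κ.ker), b * ↑x * b⁻¹ ∈ κ.ker := by
    intro b x
    rw [MonoidHom.mem_ker, map_mul, map_mul, map_inv, MonoidHom.mem_ker.mp x.2, mul_one,
      mul_inv_cancel]
  -- conjugation in G induces either identity or tAct on the abelianization of the kernel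
  have hconjG : ∀ (b : G) (x : ↥κ.ker),
      Abelianization.of (⟨b * ↑x * b⁻¹, hconj_mem b x⟩ : ↥κ.ker) = Abelianization.of x ∨
      Abelianization.of (⟨b * ↑x * b⁻¹, hconj_mem b x⟩ : ↥κ.ker) = tAct (Abelianization.of x) := by
    intro b x
    rcases hzmod2 (κ b) with hb | hb
    · left
      have h : (⟨b * ↑x * b⁻¹, hconj_mem b x⟩ : ↥κ.ker)
          = ⟨b, MonoidHom.mem_ker.mpr hb⟩ * x * (⟨b, MonoidHom.mem_ker.mpr hb⟩ : ↥κ.ker)⁻¹ := Subtype.ext rfl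
      rw [h]; exact hconjK _ x
    · right
      have hu : b * tbar ∈ κ.ker := MonoidHom.mem_ker.mpr (by rw [map_mul, hb, htbar]; decide)
      have h : (⟨b * ↑x * b⁻¹, hconj_mem b x⟩ : ↥κ.ker)
          = ⟨b * tbar, hu⟩ * T x * (⟨b * tbar, hu⟩ : ↥κ.ker)⁻¹ := by
        apply Subtype.ext
        show b * ↑x * b⁻¹ = (b * tbar) * ↑(T x) * (b * tbar)⁻¹
        rw [hT]; group
      rw [h, hconjK _ (T x)]
      exact (htAct x).symm
  -- ρ is tAct-invariant
  have hρt : ∀ a, ρ (tAct a) = ρ a := by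
    intro a
    obtain ⟨x, rfl⟩ := hsurjA a
    rw [htAct, hρ, hρ, hT,
      show tbar⁻¹ * (↑x : G) * tbar = tbar⁻¹ * ↑x * (tbar⁻¹)⁻¹ by rw [inv_inv], aux_conj]
  -- tAct is an involution
  have hTT : ∀ a, tAct (tAct a) = a := by
    intro a
    obtain ⟨x, rfl⟩ := hsurjA a
    rw [htAct, htAct]
    have hw : tbar * tbar ∈ κ.ker := MonoidHom.mem_ker.mpr (by rw [map_mul, htbar]; decide)
    have h : T (T x) = (⟨tbar * tbar, hw⟩ : ↥κ.ker)⁻¹ * x * ⟨tbar * tbar, hw⟩ := by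
      apply Subtype.ext
      show (T (T x) : G) = (tbar * tbar)⁻¹ * ↑x * (tbar * tbar)
      rw [hT, hT]; group
    rw [h, show (⟨tbar * tbar, hw⟩ : ↥κ.ker)⁻¹ * x * ⟨tbar * tbar, hw⟩
      = (⟨tbar * tbar, hw⟩ : ↥κ.ker)⁻¹ * x * ((⟨tbar * tbar, hw⟩ : ↥κ.ker)⁻¹)⁻¹ by rw [inv_inv]]
    exact aux_conj _ _
  -- the "difference" homomorphism δ a = tAct a * a⁻¹
  let δh : Abelianization ↥κ.ker →* Abelianization ↥κ.ker :=
    MonoidHom.mk' (fun a => tAct a * a⁻¹) (by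
      intro a b
      rw [map_mul, mul_inv]
      exact mul_mul_mul_comm _ _ _ _)
  have hδ : ∀ a, δh a = tAct a * a⁻¹ := fun _ => rfl
  have hDker : δh.range ≤ ρ.ker := by
    rintro _ ⟨a, rfl⟩
    rw [MonoidHom.mem_ker, hδ, map_mul, map_inv, hρt, mul_inv_cancel]
  have hinvD : ∀ a, tAct (δh a) = (δh a)⁻¹ := by
    intro a
    rw [hδ, map_mul, map_inv, hTT, mul_inv, inv_inv, mul_comm]
  -- every commutator of G lies in the pullback of δh.range
  have case1 : ∀ (g : G) (x : ↥κ.ker), ⁅g, (x : G)⁆ ∈ pullSub κ δh.range := by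
    intro g x
    have hmem : ⁅g, (x : G)⁆ ∈ κ.ker := mul_mem (hconj_mem g x) (inv_mem x.2)
    refine ⟨hmem, ?_⟩
    have e : (⟨⁅g, (x : G)⁆, hmem⟩ : ↥κ.ker)
        = ⟨g * ↑x * g⁻¹, hconj_mem g x⟩ * x⁻¹ := Subtype.ext rfl
    rw [e, map_mul, map_inv]
    rcases hconjG g x with h1 | h1 <;> rw [h1]
    · rw [mul_inv_cancel]; exact δh.range.one_mem
    · exact ⟨Abelianization.of x, rfl⟩
  have hcommP : commutator G ≤ pullSub κ δh.range := by
    rw [commutator_eq_closure]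
    refine (Subgroup.closure_le _).mpr ?_
    rintro _ ⟨g, h, rfl⟩
    rcases hzmod2 (κ h) with hh | hh
    · exact case1 g ⟨h, MonoidHom.mem_ker.mpr hh⟩
    rcases hzmod2 (κ g) with hg | hg
    · rw [show ⁅g, h⁆ = ⁅h, g⁆⁻¹ from (commutatorElement_inv h g).symm]
      exact inv_mem (case1 h ⟨g, MonoidHom.mem_ker.mpr hg⟩)
    · -- both g and h map to the generator
      have hu : g * tbar ∈ κ.ker := MonoidHom.mem_ker.mpr (by rw [map_mul, hg, htbar]; decide)
      have hv : h * tbar ∈ κ.ker := MonoidHom.mem_ker.mpr (by rw [map_mul, hh, htbar]; decide)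
      set u : ↥κ.ker := ⟨g * tbar, hu⟩ with hu_def
      set v : ↥κ.ker := ⟨h * tbar, hv⟩ with hv_def
      have key : ⁅g, h⁆ = ↑(u * T (v * u⁻¹) * v⁻¹) := by
        show ⁅g, h⁆ = ↑u * ↑(T (v * u⁻¹)) * (↑v)⁻¹
        rw [hT]
        show ⁅g, h⁆ = (g * tbar) * (tbar⁻¹ * ((h * tbar) * (g * tbar)⁻¹) * tbar) * (h * tbar)⁻¹
        rw [commutatorElement_def]; group
      have hmem : ⁅g, h⁆ ∈ κ.ker := by rw [key]; exact (u * T (v * u⁻¹) * v⁻¹).2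
      refine ⟨hmem, ?_⟩
      have e : (⟨⁅g, h⁆, hmem⟩ : ↥κ.ker) = u * T (v * u⁻¹) * v⁻¹ := Subtype.ext (by
        show ⁅g, h⁆ = ↑(u * T (v * u⁻¹) * v⁻¹); rw [key])
      rw [e, map_mul, map_mul, map_inv, ← htAct, map_mul, map_inv]
      refine ⟨Abelianization.of v * (Abelianization.of u)⁻¹, ?_⟩
      rw [hδ, map_mul, map_inv, mul_inv_rev, inv_inv, ← mul_assoc,
        mul_comm (tAct (Abelianization.of v) * (tAct (Abelianization.of u))⁻¹)
          (Abelianization.of u)]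
  -- elements of the kernel of ρ come from commutators
  have hmemcomm : ∀ x : ↥κ.ker, Abelianization.of x ∈ ρ.ker → (x : G) ∈ commutator G := by
    intro x hx
    rw [MonoidHom.mem_ker, hρ] at hx
    have h1 : Abelianization.of (x : G) = 1 := by
      apply ψ.injective; rw [hx, map_one]
    exact (QuotientGroup.eq_one_iff _).mp h1
  have hkerD : ρ.ker ≤ δh.range := by
    intro a ha
    obtain ⟨x, rfl⟩ := hsurjA a
    obtain ⟨hg, hD⟩ := hcommP (hmemcomm x ha)
    rwa [show (⟨(x : G), hg⟩ : ↥κ.ker) = x from Subtype.ext rfl] at hD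
  -- conclusion 3: tAct is inversion on ker ρ
  have hinv_ker : ∀ a ∈ ρ.ker, tAct a = a⁻¹ := by
    intro a ha
    obtain ⟨c, rfl⟩ := hkerD ha
    exact hinvD c
  -- the subgroup of squares of ker ρ
  set Msub : Subgroup (Abelianization ↥κ.ker) := Subgroup.map (powMonoidHom 2) ρ.ker with hMsub
  have hMk : ∀ b ∈ ρ.ker, b * b ∈ Msub := by
    intro b hb
    exact ⟨b, hb, by rw [powMonoidHom_apply, pow_two]⟩
  have hMt : ∀ m ∈ Msub, tAct m ∈ Msub := by
    rintro _ ⟨b, hb, rfl⟩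
    refine ⟨tAct b, ?_, ?_⟩
    · show tAct b ∈ ρ.ker
      rw [MonoidHom.mem_ker, hρt]
      exact MonoidHom.mem_ker.mp hb
    · rw [powMonoidHom_apply, powMonoidHom_apply, map_pow]
  haveI hNormal : (pullSub κ Msub).Normal := by
    constructor
    rintro n ⟨hkn, hMn⟩ b
    refine ⟨hconj_mem b ⟨n, hkn⟩, ?_⟩
    rcases hconjG b ⟨n, hkn⟩ with h1 | h1 <;> rw [h1]
    · exact hMn
    · exact hMt _ hMn
  -- commutators with one entry in ker κ whose class is in ker ρ land in pullSub κ Msub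
  have case2 : ∀ (b : G) (y : ↥κ.ker), Abelianization.of y ∈ ρ.ker →
      ⁅b, (y : G)⁆ ∈ pullSub κ Msub := by
    intro b y hy
    have hmem : ⁅b, (y : G)⁆ ∈ κ.ker := mul_mem (hconj_mem b y) (inv_mem y.2)
    refine ⟨hmem, ?_⟩
    have e : (⟨⁅b, (y : G)⁆, hmem⟩ : ↥κ.ker)
        = ⟨b * ↑y * b⁻¹, hconj_mem b y⟩ * y⁻¹ := Subtype.ext rfl
    rw [e, map_mul, map_inv]
    rcases hconjG b y with h1 | h1 <;> rw [h1]
    · rw [mul_inv_cancel]; exact Msub.one_mem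
    · rw [hinv_ker _ hy]
      exact hMk _ (inv_mem hy)
  -- the image of ker ρ is central in G ⧸ pullSub κ Msub
  have hcentral : ∀ x : ↥κ.ker, Abelianization.of x ∈ ρ.ker →
      (QuotientGroup.mk' (pullSub κ Msub)) ↑x ∈ Subgroup.center (G ⧸ pullSub κ Msub) := by
    intro x hx
    rw [Subgroup.mem_center_iff]
    intro q
    obtain ⟨b, rfl⟩ := QuotientGroup.mk'_surjective _ q
    rw [← map_mul, ← map_mul]
    show ((b * ↑x : G) : G ⧸ pullSub κ Msub) = ((↑x * b : G) : G ⧸ pullSub κ Msub)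
    rw [QuotientGroup.eq]
    have hc : (b * ↑x)⁻¹ * (↑x * b) = (⁅b⁻¹, ((x⁻¹ : ↥κ.ker) : G)⁆)⁻¹ := by
      show _ = (b⁻¹ * (↑x)⁻¹ * (b⁻¹)⁻¹ * ((↑x)⁻¹)⁻¹)⁻¹
      group
    rw [hc]
    exact inv_mem (case2 b⁻¹ x⁻¹ (by rw [map_inv]; exact inv_mem hx))
  -- the abelianization of the quotient is cyclic
  haveI : NeZero (2 * k) := ⟨by omega⟩
  let mkh := QuotientGroup.mk' (pullSub κ Msub)
  let χ : G →* Abelianization (G ⧸ pullSub κ Msub) := Abelianization.of.comp mkh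
  let F : Multiplicative (ZMod (2 * k)) →* Abelianization (G ⧸ pullSub κ Msub) :=
    (Abelianization.lift χ).comp ψ.symm.toMonoidHom
  have hFsurj : Function.Surjective F := by
    intro y
    obtain ⟨q, rfl⟩ := (fun a => Quotient.inductionOn a fun z => ⟨z, rfl⟩ :
      Function.Surjective (Abelianization.of : (G ⧸ pullSub κ Msub) → _)) y
    obtain ⟨g, rfl⟩ := QuotientGroup.mk'_surjective _ q
    refine ⟨ψ (Abelianization.of g), ?_⟩
    show (Abelianization.lift χ) (ψ.symm (ψ (Abelianization.of g))) = _
    rw [MulEquiv.symm_apply_apply, Abelianization.lift_apply_of]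
    rfl
  haveI : IsCyclic (Abelianization (G ⧸ pullSub κ Msub)) := isCyclic_of_surjective F hFsurj
  have hkerle : (Abelianization.of :
      (G ⧸ pullSub κ Msub) →* Abelianization (G ⧸ pullSub κ Msub)).ker
      ≤ Subgroup.center (G ⧸ pullSub κ Msub) := by
    have hcc : commutator (G ⧸ pullSub κ Msub) ≤ Subgroup.center (G ⧸ pullSub κ Msub) := by
      rw [commutator_eq_closure]
      refine (Subgroup.closure_le _).mpr ?_
      rintro _ ⟨p', q', rfl⟩
      obtain ⟨g, rfl⟩ := QuotientGroup.mk'_surjective _ p'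
      obtain ⟨h, rfl⟩ := QuotientGroup.mk'_surjective _ q'
      rw [← map_commutatorElement]
      obtain ⟨hg, hD⟩ := hcommP (Subgroup.commutator_mem_commutator
        (Subgroup.mem_top g) (Subgroup.mem_top h))
      exact hcentral ⟨⁅g, h⁆, hg⟩ (hDker hD)
    intro q hq
    exact hcc ((QuotientGroup.eq_one_iff _).mp (MonoidHom.mem_ker.mp hq))
  have hcommQ : ∀ a b : G ⧸ pullSub κ Msub, a * b = b * a :=
    commutative_of_cyclic_center_quotient Abelianization.of hkerle
  have hcommM : commutator G ≤ pullSub κ Msub := by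
    rw [commutator_eq_closure]
    refine (Subgroup.closure_le _).mpr ?_
    rintro _ ⟨g, h, rfl⟩
    have h1 : mkh ⁅g, h⁆ = 1 := by
      rw [map_commutatorElement]
      exact commutatorElement_eq_one_iff_commute.mpr (hcommQ _ _)
    exact (QuotientGroup.eq_one_iff _).mp h1
  -- every element of ker ρ is a square of an element of ker ρ
  have hsq : ∀ a ∈ ρ.ker, ∃ b ∈ ρ.ker, b * b = a := by
    intro a ha
    obtain ⟨x, rfl⟩ := hsurjA a
    obtain ⟨hg, hM⟩ := hcommM (hmemcomm x ha)
    rw [show (⟨(x : G), hg⟩ : ↥κ.ker) = x from Subtype.ext rfl] at hM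
    obtain ⟨b, hb, hb2⟩ := hM
    exact ⟨b, hb, by rw [← hb2]; exact (pow_two b).symm⟩
  -- ker ρ is finitely generated (finite index in a finitely generated group)
  haveI := hfg
  haveI : Finite (Multiplicative (ZMod (2 * k))) := inferInstanceAs (Finite (ZMod (2 * k)))
  haveI : Finite ((Abelianization ↥κ.ker) ⧸ ρ.ker) :=
    Finite.of_equiv _ (QuotientGroup.quotientKerEquivRange ρ).symm.toEquiv
  haveI : ρ.ker.FiniteIndex := Subgroup.finiteIndex_of_finite_quotient (H := ρ.ker)
  haveI : Group.FG ↥ρ.ker := Subgroup.fg_of_index_ne_zero _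
  obtain ⟨hfin, hodd⟩ := aux_fin_odd ↥ρ.ker (by
    intro x
    obtain ⟨b, hb, hbb⟩ := hsq x.1 x.2
    exact ⟨⟨b, hb⟩, Subtype.ext hbb⟩)
  obtain ⟨m, hm⟩ := hodd
  refine ⟨hfin, ⟨m, hm⟩, hinv_ker, ?_, ?_⟩
  · -- splitting
    intro a
    have hd : a * (tAct a)⁻¹ ∈ ρ.ker := by
      rw [MonoidHom.mem_ker, map_mul, map_inv, hρt, mul_inv_cancel]
    set d : Abelianization ↥κ.ker := a * (tAct a)⁻¹ with hd_def
    have hdn : d ^ Nat.card ↥ρ.ker = 1 := by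
      have h := congrArg Subtype.val
        (pow_card_eq_one' (G := ↥ρ.ker) (x := ⟨d, hd⟩))
      simpa using h
    have hb2 : d ^ (m + 1) * d ^ (m + 1) = d := by
      rw [← pow_add, show m + 1 + (m + 1) = Nat.card ↥ρ.ker + 1 by omega, pow_succ, hdn,
        one_mul]
    have hbker : d ^ (m + 1) ∈ ρ.ker := pow_mem hd _
    refine ⟨d ^ (m + 1), hbker, (d ^ (m + 1))⁻¹ * a, ?_, ?_⟩
    · rw [map_mul, map_inv, hinv_ker _ hbker, inv_inv]
      have hta : tAct a = d⁻¹ * a := by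
        rw [hd_def, mul_inv_rev, inv_inv, mul_assoc, inv_mul_cancel, mul_one]
      rw [hta]
      apply mul_left_cancel (a := d ^ (m + 1))
      rw [mul_inv_cancel_left, ← mul_assoc, ← mul_assoc, hb2, mul_inv_cancel, one_mul]
    · rw [mul_inv_cancel_left]
  · -- no nontrivial fixed points in ker ρ
    intro a ha hfix
    have h1 : a⁻¹ = a := by rw [← hinv_ker a ha, hfix]
    have haa : a * a = 1 := by nth_rewrite 1 [← h1]; exact inv_mul_cancel a
    set x : ↥ρ.ker := ⟨a, ha⟩ with hx_def
    have hx2 : x * x = 1 := Subtype.ext haa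
    have h1x : x ^ (Nat.card ↥ρ.ker + 1) = x := by
      rw [pow_succ, pow_card_eq_one', one_mul]
    have h2x : x ^ (Nat.card ↥ρ.ker + 1) = 1 := by
      rw [show Nat.card ↥ρ.ker + 1 = 2 * (m + 1) by omega, pow_mul,
        show x ^ 2 = 1 by rw [pow_two]; exact hx2, one_pow]
    have hx1 : x = 1 := by rw [← h1x, h2x]
    exact congrArg Subtype.val hx1
end

section
/- Let A be a ℤ[ℤ/2]-module which is a quotient of ℤ[ℤ/2]/(t-1) ⊕ (ℤ[ℤ/2])^{d-2}, and let à ⊆ A be a submodule on which the generator t acts by -1. Then for every odd prime p, ℓ_p(Ã) ≤ d - 2, i.e., the p-primary part of à requires at most d-2 generators. -/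
/-- The group ring `ℤ[ℤ/2]`. -/
abbrev GrpRing : Type := MonoidAlgebra ℤ (Multiplicative (ZMod 2))

/-- The generator `t` of `ℤ/2` inside `ℤ[ℤ/2]`. -/
noncomputable def tGen : GrpRing :=
  MonoidAlgebra.of ℤ (Multiplicative (ZMod 2)) (Multiplicative.ofAdd 1)

/-- The `ℤ[ℤ/2]`-module `ℤ[ℤ/2]/(t-1) ⊕ (ℤ[ℤ/2])^{d-2}`. -/
abbrev AlexTarget (d : ℕ) : Type :=
  (GrpRing ⧸ Ideal.span {tGen - 1}) × (Fin (d - 2) → GrpRing)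

/-- The minimal number of generators of an (additive) abelian group. -/
noncomputable def minGen (A : Type*) [AddCommGroup A] : ℕ :=
  sInf {m | ∃ f : Fin m → A, AddSubgroup.closure (Set.range f) = ⊤}

/-- `ℓ_p`: the minimal number of generators of the `p`-primary part. -/
noncomputable def ellp (p : ℕ) [Fact p.Prime] (A : Type*) [AddCommGroup A] : ℕ :=
  minGen (AddCommGroup.primaryComponent A p)

lemma tGen_mul_tGen : tGen * tGen = 1 := by
  rw [tGen, MonoidAlgebra.of_apply, MonoidAlgebra.single_mul_single, mul_one]
  have h : (Multiplicative.ofAdd (1 : ZMod 2)) * (Multiplicative.ofAdd 1) = 1 := by decide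
  rw [h, MonoidAlgebra.one_def]

/-- The character `t ↦ -1`. -/
noncomputable def chiNeg : Multiplicative (ZMod 2) →* ℤ where
  toFun g := if g = 1 then 1 else -1
  map_one' := by simp
  map_mul' := by decide

/-- The ring map `ℤ[ℤ/2] → ℤ`, `t ↦ -1`. -/
noncomputable def sigNegZ2 : GrpRing →ₐ[ℤ] ℤ :=
  (MonoidAlgebra.lift ℤ ℤ (Multiplicative (ZMod 2))) chiNeg

lemma sigNeg_smul {A : Type*} [AddCommGroup A] [Module GrpRing A]
    (s : GrpRing) (a : A) (ha : tGen • a = -a) : s • a = (sigNegZ2 s) • a := by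
  induction s using MonoidAlgebra.induction_on with
  | of g =>
    have hg : g = 1 ∨ g = Multiplicative.ofAdd 1 := by revert g; decide
    rcases hg with rfl | rfl
    · rw [map_one, one_smul, map_one, one_smul]
    · have h1 : MonoidAlgebra.of ℤ (Multiplicative (ZMod 2)) (Multiplicative.ofAdd 1) = tGen := rfl
      have h2 : sigNegZ2 tGen = -1 := by
        rw [tGen, sigNegZ2, MonoidAlgebra.lift_of]
        have : (Multiplicative.ofAdd (1 : ZMod 2)) ≠ 1 := by decide
        simp [chiNeg, this]
      rw [h1, ha, h2]
      simp
  | add s₁ s₂ h₁ h₂ => rw [add_smul, h₁, h₂, map_add, add_smul]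
  | smul z s h => rw [smul_assoc, h, map_smul, smul_assoc]

lemma minGen_le {B : Type*} [AddCommGroup B] {n : ℕ} (g : Fin n → B)
    (h : AddSubgroup.closure (Set.range g) = ⊤) : minGen B ≤ n :=
  Nat.sInf_le ⟨g, h⟩

set_option maxHeartbeats 1000000 in
/-- Let `A` be a `ℤ[ℤ/2]`-module which is a quotient of
`ℤ[ℤ/2]/(t-1) ⊕ (ℤ[ℤ/2])^{d-2}`, and let `Ã ⊆ A` be a submodule on which the
generator `t` acts by `-1`.  Then for every odd prime `p`, `ℓ_p(Ã) ≤ d - 2`. -/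
theorem stmt_16 (p : ℕ) [Fact p.Prime] (hp2 : p ≠ 2) (d : ℕ) (hd : 2 ≤ d)
    (A : Type*) [AddCommGroup A] [Module GrpRing A]
    (f : AlexTarget d →ₗ[GrpRing] A) (hf : Function.Surjective f)
    (Atil : Submodule GrpRing A) (hneg : ∀ x ∈ Atil, tGen • x = -x) :
    ellp p ↥Atil ≤ d - 2 := by
  classical
  set k := d - 2 with hk
  -- Finiteness / Noetherian setup
  haveI : Module.Finite ℤ GrpRing :=
    Module.Finite.of_basis (MonoidAlgebra.basis (Multiplicative (ZMod 2)) ℤ)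
  haveI : Module.Finite GrpRing (GrpRing ⧸ Ideal.span {tGen - 1}) :=
    Module.Finite.of_surjective (Algebra.linearMap GrpRing (GrpRing ⧸ Ideal.span {tGen - 1}))
      Ideal.Quotient.mk_surjective
  haveI : Module.Finite GrpRing (AlexTarget d) := Module.Finite.prod
  haveI : Module.Finite ℤ (AlexTarget d) := Module.Finite.trans GrpRing (AlexTarget d)
  haveI : Module.Finite ℤ A := Module.Finite.of_surjective (f.restrictScalars ℤ) hf
  haveI : IsNoetherian ℤ A := isNoetherian_of_isNoetherianRing_of_finite ℤ A
  have hcast : ∀ (n : ℕ) (a : A), ((p : ℤ) ^ n) • a = (p ^ n) • a := fun n a => by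
    rw [← Nat.cast_pow, natCast_zsmul]
  -- the p-primary component
  set P := AddCommGroup.primaryComponent (↥Atil) p with hP
  -- its image in A, as a `ℤ`-submodule
  set Pm : Submodule ℤ A :=
    AddSubgroup.toIntSubmodule (P.map Atil.subtype.toAddMonoidHom) with hPm
  have hPm_mem : ∀ x : A, x ∈ Pm ↔ ∃ z : ↥Atil, z ∈ P ∧ (z : A) = x := by
    intro x
    constructor
    · rintro ⟨z, hz, rfl⟩; exact ⟨z, hz, rfl⟩
    · rintro ⟨z, hz, rfl⟩; exact ⟨z, hz, rfl⟩
  have hPm_Atil : ∀ x ∈ Pm, x ∈ Atil := by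
    intro x hx
    obtain ⟨z, _, rfl⟩ := (hPm_mem x).mp hx
    exact z.2
  have hPm_tors : ∀ x ∈ Pm, ∃ n : ℕ, p ^ n • x = 0 := by
    intro x hx
    obtain ⟨z, hz, rfl⟩ := (hPm_mem x).mp hx
    obtain ⟨n, hn⟩ := hz
    refine ⟨n, ?_⟩
    have : p ^ n • z = 0 := by rw [← hn]
    have := congrArg (Atil.subtype) this
    simpa using this
  -- a uniform exponent
  obtain ⟨N, hN⟩ : ∃ N : ℕ, ∀ x ∈ Pm, p ^ N • x = 0 := by
    obtain ⟨S, hS⟩ := IsNoetherian.noetherian Pm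
    choose nn hnn using hPm_tors
    by_cases hSe : S = ∅
    · refine ⟨0, ?_⟩
      intro x hx
      rw [← hS, hSe] at hx
      simp only [Finset.coe_empty, Submodule.span_empty, Submodule.mem_bot] at hx
      simp [hx]
    · set N := S.sup fun s => if h : (s : A) ∈ Pm then nn s h else 0 with hNdef
      refine ⟨N, ?_⟩
      have hker : Pm ≤ LinearMap.ker ((p ^ N : ℤ) • (LinearMap.id : A →ₗ[ℤ] A)) := by
        rw [← hS, Submodule.span_le]
        intro s hs
        have hsPm : s ∈ Pm := by rw [← hS]; exact Submodule.subset_span hs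
        have hle : nn s hsPm ≤ N := by
          have := Finset.le_sup (f := fun s => if h : (s : A) ∈ Pm then nn s h else 0) hs
          simpa [hsPm] using this
        simp only [SetLike.mem_coe, LinearMap.mem_ker, LinearMap.smul_apply, LinearMap.id_coe,
          id_eq]
        have : p ^ N • s = 0 := by
          have hsplit : p ^ N = p ^ (N - nn s hsPm) * p ^ (nn s hsPm) := by
            rw [← pow_add, Nat.sub_add_cancel hle]
          rw [hsplit, mul_smul, hnn s hsPm, smul_zero]
        rw [hcast N s, this]
      intro x hx
      have := hker hx
      simp only [LinearMap.mem_ker, LinearMap.smul_apply, LinearMap.id_coe, id_eq] at this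
      rw [← hcast N x]; exact this
  -- arithmetic: u with 2u = p^N + 1
  obtain ⟨jodd, hj⟩ : Odd (p ^ N) := (Nat.Prime.odd_of_ne_two (Fact.out) hp2).pow
  -- the element r = u (1 - t)
  set r : GrpRing := ((jodd : ℤ) + 1) • (1 - tGen) with hr
  have htr : tGen * r = -r := by
    rw [hr, mul_smul_comm, mul_sub, mul_one, tGen_mul_tGen, ← smul_neg, neg_sub]
  have hrmem : r ∈ Ideal.span {tGen - 1} := by
    rw [Ideal.mem_span_singleton]
    refine ⟨-(((jodd : ℤ) + 1) • 1), ?_⟩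
    rw [mul_neg, mul_smul_comm, mul_one, ← smul_neg, neg_sub, hr]
  have hrq : ∀ q : GrpRing ⧸ Ideal.span {tGen - 1}, r • q = 0 := by
    intro q
    obtain ⟨a, rfl⟩ := Ideal.Quotient.mk_surjective q
    rw [← Ideal.Quotient.mk_eq_mk, ← Submodule.Quotient.mk_smul, smul_eq_mul,
      Ideal.Quotient.mk_eq_mk, Ideal.Quotient.eq_zero_iff_mem]
    exact Ideal.mul_mem_right a _ hrmem
  -- r acts as identity on p^N-torsion elements of Atil
  have hrx : ∀ x : A, x ∈ Atil → p ^ N • x = 0 → r • x = x := by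
    intro x hx1 hx2
    have h1 : (1 - tGen) • x = (2 : ℤ) • x := by
      rw [sub_smul, one_smul, hneg x hx1, sub_neg_eq_add, two_zsmul]
    calc r • x = ((jodd : ℤ) + 1) • ((1 - tGen) • x) := smul_assoc _ _ _
      _ = ((jodd : ℤ) + 1) • ((2 : ℤ) • x) := by rw [h1]
      _ = (((jodd : ℤ) + 1) * 2) • x := smul_smul _ _ _
      _ = (((p : ℤ) ^ N) + 1) • x := by
          congr 1
          have : ((p : ℤ)) ^ N = 2 * (jodd : ℤ) + 1 := by exact_mod_cast hj
          rw [this]; ring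
      _ = ((p : ℤ) ^ N) • x + x := by rw [add_smul, one_smul]
      _ = x := by rw [hcast N x, hx2, zero_add]
  -- the generators c i
  set c : Fin k → A := fun i => f (0, Pi.single i r) with hc
  have hsingle_neg : ∀ i : Fin k, (Pi.single i (-r) : Fin k → GrpRing) = -Pi.single i r := by
    intro i
    have := Pi.single_smul' (β := GrpRing) i (-1 : ℤ) r
    simpa using this
  have hcneg : ∀ i, tGen • c i = -(c i) := by
    intro i
    have h1 : tGen • ((0, Pi.single i r) : AlexTarget d)
        = ((0, Pi.single i (tGen * r)) : AlexTarget d) := by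
      rw [Prod.smul_mk, smul_zero]
      congr 1
      rw [← Pi.single_smul' i tGen r, smul_eq_mul]
    have h2 : ((0, Pi.single i (-r)) : AlexTarget d) = -((0, Pi.single i r) : AlexTarget d) := by
      rw [Prod.neg_mk, neg_zero, hsingle_neg i]
    calc tGen • c i = f (tGen • ((0, Pi.single i r) : AlexTarget d)) := (map_smul f _ _).symm
      _ = f ((0, Pi.single i (tGen * r)) : AlexTarget d) := by rw [h1]
      _ = f (-((0, Pi.single i r) : AlexTarget d)) := by rw [htr, h2]
      _ = -(c i) := map_neg f _
  -- the linear map from ℤ^k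
  set φ : (Fin k → ℤ) →ₗ[ℤ] A := Fintype.linearCombination ℤ c with hφ
  -- Pm is contained in the range of φ
  have hPm_range : Pm ≤ LinearMap.range φ := by
    intro x hx
    have hx1 : x ∈ Atil := hPm_Atil x hx
    have hx2 : p ^ N • x = 0 := hN x hx
    obtain ⟨ξ, rfl⟩ := hf x
    refine ⟨fun i => sigNegZ2 (ξ.2 i), ?_⟩
    rw [hφ, Fintype.linearCombination_apply]
    have step1 : ∀ i : Fin k, sigNegZ2 (ξ.2 i) • c i = (ξ.2 i) • c i := fun i =>
      (sigNeg_smul (ξ.2 i) (c i) (hcneg i)).symm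
    calc ∑ i, sigNegZ2 (ξ.2 i) • c i = ∑ i, (ξ.2 i) • c i :=
          Finset.sum_congr rfl fun i _ => step1 i
      _ = f ξ := ?_
    have hsum2 : (∑ i, (ξ.2 i) • (Pi.single i r : Fin k → GrpRing)) = fun i => ξ.2 i * r := by
      calc (∑ i, (ξ.2 i) • (Pi.single i r : Fin k → GrpRing))
          = ∑ i, (Pi.single i (ξ.2 i * r) : Fin k → GrpRing) := by
            refine Finset.sum_congr rfl fun i _ => ?_
            rw [← Pi.single_smul' i (ξ.2 i) r, smul_eq_mul]
        _ = fun i => ξ.2 i * r := Finset.univ_sum_single _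
    set F : (Fin k → GrpRing) →ₗ[GrpRing] A :=
      f.comp (LinearMap.inr GrpRing (GrpRing ⧸ Ideal.span {tGen - 1}) (Fin k → GrpRing)) with hF
    have hFc : ∀ i, F (Pi.single i r) = c i := fun i => rfl
    have hinr : ((0, fun i => ξ.2 i * r) : AlexTarget d) = r • ξ := by
      have hrξ : r • ξ = (r • ξ.1, r • ξ.2) := rfl
      rw [hrξ, hrq ξ.1]
      refine congrArg _ ?_
      funext i
      show ξ.2 i * r = r * ξ.2 i
      exact mul_comm _ _
    calc ∑ i, (ξ.2 i) • c i = ∑ i, (ξ.2 i) • F (Pi.single i r) := by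
          refine Finset.sum_congr rfl fun i _ => by rw [hFc]
      _ = ∑ i, F ((ξ.2 i) • (Pi.single i r : Fin k → GrpRing)) := by
          refine Finset.sum_congr rfl fun i _ => (map_smul F _ _).symm
      _ = F (∑ i, (ξ.2 i) • (Pi.single i r : Fin k → GrpRing)) := (map_sum F _ _).symm
      _ = F (fun i => ξ.2 i * r) := by rw [hsum2]
      _ = f ((0, fun i => ξ.2 i * r) : AlexTarget d) := rfl
      _ = f (r • ξ) := by rw [hinr]
      _ = r • f ξ := map_smul f r ξ
      _ = f ξ := hrx (f ξ) hx1 hx2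
  -- pull back to ℤ^k and use the PID structure theorem
  set Qs : Submodule ℤ (Fin k → ℤ) := Pm.comap φ with hQs
  obtain ⟨m, b⟩ := Submodule.basisOfPid (Pi.basisFun ℤ (Fin k)) Qs
  have hmk : m ≤ k := by
    have hli : LinearIndependent ℤ (fun i => (b i : Fin k → ℤ)) :=
      b.linearIndependent.map' Qs.subtype (Submodule.ker_subtype Qs)
    have := hli.fintype_card_le_finrank
    rwa [Fintype.card_fin, Module.finrank_fin_fun] at this
  have hmap : Submodule.map φ Qs = Pm := by
    rw [hQs, Submodule.map_comap_eq, inf_eq_right.mpr hPm_range]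
  -- choose generators of P
  have hgen_ex : ∀ j : Fin m, ∃ z : ↥Atil, z ∈ P ∧ (z : A) = φ (b j : Fin k → ℤ) := by
    intro j
    have : φ (b j : Fin k → ℤ) ∈ Pm := by
      rw [← hmap]
      exact ⟨(b j : Fin k → ℤ), (b j).2, rfl⟩
    exact (hPm_mem _).mp this
  choose z hzP hzφ using hgen_ex
  set gens : Fin m → ↥P := fun j => ⟨z j, hzP j⟩ with hgens
  -- the embedding ↥P →+ A
  set ψ : ↥P →+ A := (Atil.subtype.toAddMonoidHom).comp P.subtype with hψ
  have hψinj : Function.Injective ψ := by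
    intro a b hab
    apply Subtype.ext
    apply Subtype.ext
    exact hab
  have hclosure : AddSubgroup.closure (Set.range gens) = ⊤ := by
    rw [eq_top_iff]
    intro w _
    have hw1 : ψ w ∈ Pm := (hPm_mem _).mpr ⟨(w : ↥Atil), w.2, rfl⟩
    have hQspan : Qs = Submodule.span ℤ (Set.range fun j => (b j : Fin k → ℤ)) := by
      have h1 : Submodule.map Qs.subtype (Submodule.span ℤ (Set.range b)) =
          Submodule.span ℤ (Set.range fun j => (b j : Fin k → ℤ)) := by
        rw [Submodule.map_span]
        congr 1
        rw [← Set.range_comp]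
        rfl
      rw [← h1, b.span_eq, Submodule.map_top, Submodule.range_subtype]
    have hPmspan : Pm = Submodule.span ℤ (Set.range fun j => ψ (gens j)) := by
      rw [← hmap, hQspan, Submodule.map_span, ← Set.range_comp]
      have hfun : (⇑φ ∘ fun j => (b j : Fin k → ℤ)) = fun j => ψ (gens j) := by
        funext j
        show φ (b j : Fin k → ℤ) = ψ (gens j)
        rw [← hzφ j]
        rfl
      rw [hfun]
    have hw2 : ψ w ∈ AddSubgroup.closure (Set.range fun j => ψ (gens j)) := by
      rw [← Submodule.span_int_eq_addSubgroupClosure]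
      rw [hPmspan] at hw1
      exact hw1
    have hw3 : ψ w ∈ AddSubgroup.map ψ (AddSubgroup.closure (Set.range gens)) := by
      rw [AddMonoidHom.map_closure, ← Set.range_comp]
      exact hw2
    obtain ⟨v, hv, hvw⟩ := hw3
    rwa [← hψinj hvw]
  calc ellp p ↥Atil ≤ m := minGen_le gens hclosure
    _ ≤ k := hmk
end
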